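/- Let M and N be II₁ factors acting nondegenerately on a Hilbert space H and suppose that P ⊆ M and Q ⊆ N are unital von Neumann subalgebras. Then d(P' ∩ M, Q' ∩ N) ≤ d(M,N) + 2√2·d(P,Q). -/

import Mathlib

namespace KK

variable {H : Type*} [NormedAddCommGroup H] [InnerProductSpace ℂ H] [CompleteSpace H]

/-- The near inclusion `M ⊆_γ N`: every `x ∈ M` is approximated by some `y ∈ N`
with `‖x - y‖ ≤ γ‖x‖`. -/
def NearIncl (M N : Set (H →L[ℂ] H)) (γ : ℝ) : Prop :=
  ∀ x ∈ M, ∃ y ∈ N, ‖x - y‖ ≤ γ * ‖x‖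

/-- The strict near inclusion `M ⊂_γ N`: `M ⊆_γ' N` for some `γ' < γ`. -/
def NearInclLt (M N : Set (H →L[ℂ] H)) (γ : ℝ) : Prop :=
  ∃ γ' < γ, NearIncl M N γ'

/-- The Kadison–Kastler distance between two subalgebras of `B(H)`: the infimum of those
`γ > 0` such that each element of the unit ball of one algebra is within `γ` of the unit
ball of the other. -/
noncomputable def kkDist (M N : Set (H →L[ℂ] H)) : ℝ :=
  sInf {γ : ℝ | 0 < γ ∧
    (∀ x ∈ M, ‖x‖ ≤ 1 → ∃ y ∈ N, ‖y‖ ≤ 1 ∧ ‖x - y‖ < γ) ∧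
    (∀ y ∈ N, ‖y‖ ≤ 1 → ∃ x ∈ M, ‖x‖ ≤ 1 ∧ ‖y - x‖ < γ)}

/-- `τ` is a faithful normal tracial state on the von Neumann algebra `M`.  Normality is
expressed as weak-operator-topology continuity on the closed unit ball of `M`. -/
structure IsFNTrace (M : VonNeumannAlgebra H) (τ : (H →L[ℂ] H) →ₗ[ℂ] ℂ) : Prop where
  map_one : τ 1 = 1
  nonneg : ∀ x ∈ M, 0 ≤ (τ (star x * x)).re
  real : ∀ x ∈ M, (τ (star x * x)).im = 0
  faithful : ∀ x ∈ M, τ (star x * x) = 0 → x = 0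
  tracial : ∀ x ∈ M, ∀ y ∈ M, τ (x * y) = τ (y * x)
  normal : ∀ (ι : Type) (l : Filter ι) (x : ι → H →L[ℂ] H) (y : H →L[ℂ] H),
    (∀ i, x i ∈ M) → (∀ i, ‖x i‖ ≤ 1) → y ∈ M →
    (∀ ξ η : H, Filter.Tendsto (fun i => (inner ℂ ((x i) ξ) η : ℂ)) l (nhds (inner ℂ (y ξ) η : ℂ))) →
    Filter.Tendsto (fun i => τ (x i)) l (nhds (τ y))

/-- The scalar operators `ℂ·1 ⊆ B(H)`. -/
def scalars (H : Type*) [NormedAddCommGroup H] [InnerProductSpace ℂ H] [CompleteSpace H] :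
    Set (H →L[ℂ] H) :=
  Set.range fun c : ℂ => c • (1 : H →L[ℂ] H)

/-- `M` is a II₁ factor: an infinite-dimensional von Neumann algebra with trivial center
admitting a faithful normal tracial state. -/
def IsIIOneFactor (M : VonNeumannAlgebra H) : Prop :=
  ((M : Set (H →L[ℂ] H)) ∩ Set.centralizer (M : Set (H →L[ℂ] H)) = scalars H) ∧
  (¬ ∃ s : Finset (H →L[ℂ] H),
      (M : Set (H →L[ℂ] H)) ⊆ (Submodule.span ℂ (s : Set (H →L[ℂ] H)) : Set (H →L[ℂ] H))) ∧
  ∃ τ : (H →L[ℂ] H) →ₗ[ℂ] ℂ, IsFNTrace M τ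

/-- `M` has separable predual; for a II₁ factor this is equivalent to being generated, as a
von Neumann algebra, by a countable self-adjoint subset. -/
def HasSeparablePredual (M : VonNeumannAlgebra H) : Prop :=
  ∃ S : Set (H →L[ℂ] H), S.Countable ∧ S ⊆ (M : Set (H →L[ℂ] H)) ∧ (∀ x ∈ S, star x ∈ S) ∧
    Set.centralizer (Set.centralizer S) = (M : Set (H →L[ℂ] H))

/-- The normalizer of `A` in `M`: the unitaries `u ∈ M` with `u A u* = A`. -/
def normalizer (A M : Set (H →L[ℂ] H)) : Set (H →L[ℂ] H) :=
  {u | u ∈ M ∧ u ∈ unitary (H →L[ℂ] H) ∧ (fun x => u * x * star u) '' A = A}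

/-- `A` is a regular subalgebra of `M`: its normalizer generates `M` as a von Neumann
algebra (i.e. the double commutant of the normalizer is `M`). -/
def IsRegular (A M : Set (H →L[ℂ] H)) : Prop :=
  Set.centralizer (Set.centralizer (normalizer A M)) = M

/-- `A` is singular in `M`: every normalizing unitary of `A` in `M` lies in `A`. -/
def IsSingular (A M : Set (H →L[ℂ] H)) : Prop :=
  normalizer A M ⊆ A

/-- `A` is a masa in `M`: a maximal abelian von Neumann subalgebra, i.e. `A = A' ∩ M`. -/
def IsMasaIn (A M : VonNeumannAlgebra H) : Prop :=
  (A : Set (H →L[ℂ] H)) ⊆ (M : Set (H →L[ℂ] H)) ∧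
    (A : Set (H →L[ℂ] H)) = Set.centralizer (A : Set (H →L[ℂ] H)) ∩ (M : Set (H →L[ℂ] H))

/-- A Cartan masa is a regular masa. -/
def IsCartan (A M : VonNeumannAlgebra H) : Prop :=
  IsMasaIn A M ∧ IsRegular (A : Set (H →L[ℂ] H)) (M : Set (H →L[ℂ] H))

/-- A subset `P ⊆ B(H)` is amenable (injective) if there is a norm-one linear projection
from `B(H)` onto `P`. -/
def IsAmenableSet (P : Set (H →L[ℂ] H)) : Prop :=
  ∃ E : (H →L[ℂ] H) →L[ℂ] (H →L[ℂ] H), ‖E‖ = 1 ∧ (∀ x, E x ∈ P) ∧ ∀ x ∈ P, E x = x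

/-- A von Neumann algebra is diffuse if it has no nonzero minimal projections. -/
def IsDiffuse (M : VonNeumannAlgebra H) : Prop :=
  ¬ ∃ p : H →L[ℂ] H, p ∈ M ∧ p ≠ 0 ∧ star p = p ∧ p * p = p ∧
    ∀ q : H →L[ℂ] H, q ∈ M → star q = q → q * q = q → q * p = q → q = 0 ∨ q = p

/-- A II₁ factor `M` is solid if every diffuse unital von Neumann subalgebra `P ⊆ M` has
amenable relative commutant `P' ∩ M`. -/
def IsSolid (M : VonNeumannAlgebra H) : Prop :=
  ∀ P : VonNeumannAlgebra H, (P : Set (H →L[ℂ] H)) ⊆ (M : Set (H →L[ℂ] H)) → IsDiffuse P →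
    IsAmenableSet (Set.centralizer (P : Set (H →L[ℂ] H)) ∩ (M : Set (H →L[ℂ] H)))

/-- A II₁ factor `M` is strongly solid if for every diffuse amenable unital von Neumann
subalgebra `B ⊆ M` the von Neumann algebra generated by the normalizer of `B` in `M` is
amenable. -/
def IsStronglySolid (M : VonNeumannAlgebra H) : Prop :=
  ∀ B : VonNeumannAlgebra H, (B : Set (H →L[ℂ] H)) ⊆ (M : Set (H →L[ℂ] H)) → IsDiffuse B →
    IsAmenableSet (B : Set (H →L[ℂ] H)) →
    IsAmenableSet
      (Set.centralizer (Set.centralizer (normalizer (B : Set (H →L[ℂ] H)) (M : Set (H →L[ℂ] H)))))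

/-- The 2-norm `‖x‖_{2,M} = τ(x*x)^{1/2}` associated to a trace `τ`. -/
noncomputable def norm2 (τ : (H →L[ℂ] H) →ₗ[ℂ] ℂ) (x : H →L[ℂ] H) : ℝ :=
  Real.sqrt (τ (star x * x)).re

/-- Property Γ of Murray and von Neumann for a II₁ factor `M`, with respect to its trace. -/
def HasGamma (M : VonNeumannAlgebra H) : Prop :=
  ∀ τ : (H →L[ℂ] H) →ₗ[ℂ] ℂ, IsFNTrace M τ →
    ∀ (n : ℕ) (x : Fin n → H →L[ℂ] H), (∀ i, x i ∈ M) → ∀ ε : ℝ, 0 < ε →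
      ∃ u : H →L[ℂ] H, u ∈ M ∧ u ∈ unitary (H →L[ℂ] H) ∧ τ u = 0 ∧
        ∀ i, norm2 τ (u * x i - x i * u) < ε

/-- `M` is in standard position on `H` (`dim_M H = 1`): there is a unit vector `ξ ∈ H`
cyclic for `M` such that the associated vector state is the trace of `M`. -/
def IsStandardPosition (M : VonNeumannAlgebra H) : Prop :=
  ∃ τ : (H →L[ℂ] H) →ₗ[ℂ] ℂ, IsFNTrace M τ ∧ ∃ ξ : H, ‖ξ‖ = 1 ∧
    Dense {y : H | ∃ x ∈ (M : Set (H →L[ℂ] H)), x ξ = y} ∧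
    ∀ x ∈ (M : Set (H →L[ℂ] H)), (inner ℂ ξ (x ξ) : ℂ) = τ x

/-- `P` and `Q` commute elementwise. -/
def Commutes (P Q : Set (H →L[ℂ] H)) : Prop :=
  ∀ p ∈ P, ∀ q ∈ Q, p * q = q * p

/-- `M` is generated, as a von Neumann algebra, by `P` and `Q`: `(P ∪ Q)'' = M`. -/
def Generates2 (P Q M : Set (H →L[ℂ] H)) : Prop :=
  Set.centralizer (Set.centralizer (P ∪ Q)) = M

/-- A subset of `B(H)` is a II₁ factor if it is the carrier of a von Neumann algebra
which is a II₁ factor. -/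
def IsIIOneFactorSet (S : Set (H →L[ℂ] H)) : Prop :=
  ∃ A : VonNeumannAlgebra H, (A : Set (H →L[ℂ] H)) = S ∧ IsIIOneFactor A

/-- A II₁ factor is prime if it is not generated by two commuting II₁ subfactors. -/
def IsPrime (M : VonNeumannAlgebra H) : Prop :=
  ¬ ∃ P Q : VonNeumannAlgebra H, IsIIOneFactor P ∧ IsIIOneFactor Q ∧
    (P : Set (H →L[ℂ] H)) ⊆ (M : Set (H →L[ℂ] H)) ∧
    (Q : Set (H →L[ℂ] H)) ⊆ (M : Set (H →L[ℂ] H)) ∧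
    Commutes (P : Set (H →L[ℂ] H)) (Q : Set (H →L[ℂ] H)) ∧
    Generates2 (P : Set (H →L[ℂ] H)) (Q : Set (H →L[ℂ] H)) (M : Set (H →L[ℂ] H))

/-- The operator on `H ⊕₂ ⋯ ⊕₂ H` given by a matrix of operators on `H`. -/
noncomputable def matOp {n : ℕ} (x : Fin n → Fin n → (H →L[ℂ] H)) :
    (PiLp 2 fun _ : Fin n => H) →L[ℂ] (PiLp 2 fun _ : Fin n => H) :=
  ((PiLp.continuousLinearEquiv 2 ℂ fun _ : Fin n => H).symm :
      (∀ _ : Fin n, H) →L[ℂ] PiLp 2 fun _ : Fin n => H).comp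
    ((ContinuousLinearMap.pi fun i => ∑ j, (x i j).comp (ContinuousLinearMap.proj j)).comp
      ((PiLp.continuousLinearEquiv 2 ℂ fun _ : Fin n => H) :
        (PiLp 2 fun _ : Fin n => H) →L[ℂ] ∀ _ : Fin n, H))

/-- The `n`-fold matrix amplification `M ⊗ 𝕄ₙ` of `M ⊆ B(H)`, acting on `H^n`. -/
def ampl (n : ℕ) (M : Set (H →L[ℂ] H)) :
    Set ((PiLp 2 fun _ : Fin n => H) →L[ℂ] (PiLp 2 fun _ : Fin n => H)) :=
  {T | ∃ x : Fin n → Fin n → (H →L[ℂ] H), (∀ i j, x i j ∈ M) ∧ T = matOp x}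

/-- The completely bounded distance `d_cb(M,N) = supₙ d(M ⊗ 𝕄ₙ, N ⊗ 𝕄ₙ)`. -/
noncomputable def kkDistCb (M N : Set (H →L[ℂ] H)) : ℝ :=
  ⨆ n : ℕ, kkDist (ampl (n + 1) M) (ampl (n + 1) N)

-- ===== auxiliary development =====
set_option maxHeartbeats 1000000
set_option synthInstance.maxHeartbeats 400000
section Aux

open Filter NormedSpace

local notation "⟪" x ", " y "⟫" => @inner ℂ _ _ x y

lemma star_apply_inner (a : H →L[ℂ] H) (ξ η : H) : ⟪(star a) ξ, η⟫ = ⟪ξ, a η⟫ := by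
  rw [ContinuousLinearMap.star_eq_adjoint]
  exact ContinuousLinearMap.adjoint_inner_left a η ξ

lemma apply_inner (a : H →L[ℂ] H) (ξ η : H) : ⟪a ξ, η⟫ = ⟪ξ, (star a) η⟫ := by
  conv_lhs => rw [← star_star a]
  exact star_apply_inner (star a) ξ η

lemma apply_norm_le' {c : H →L[ℂ] H} (hc : ‖c‖ ≤ 1) (ξ : H) : ‖c ξ‖ ≤ ‖ξ‖ := by
  calc ‖c ξ‖ ≤ ‖c‖ * ‖ξ‖ := c.le_opNorm ξ
    _ ≤ 1 * ‖ξ‖ := mul_le_mul_of_nonneg_right hc (norm_nonneg ξ)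
    _ = ‖ξ‖ := one_mul _

lemma unitary_norm_le {u : H →L[ℂ] H} (hu : u ∈ unitary (H →L[ℂ] H)) : ‖u‖ ≤ 1 := by
  have h1 : star u * u = 1 := (Unitary.mem_iff.1 hu).1
  have h2 : ‖u‖ * ‖u‖ = ‖(1 : H →L[ℂ] H)‖ := by rw [← CStarRing.norm_star_mul_self, h1]
  have h3 : ‖(1 : H →L[ℂ] H)‖ ≤ 1 := by
    rw [ContinuousLinearMap.one_def]; exact ContinuousLinearMap.norm_id_le
  nlinarith [norm_nonneg u]

lemma isClosed_centralizer' (S : Set (H →L[ℂ] H)) : IsClosed (Set.centralizer S) := by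
  have : Set.centralizer S = ⋂ a ∈ S, {c : H →L[ℂ] H | a * c = c * a} := by
    ext c; simp [Set.mem_centralizer_iff]
  rw [this]
  exact isClosed_biInter fun a _ => isClosed_eq (by continuity) (by continuity)

lemma vNa_isClosed (W : VonNeumannAlgebra H) : IsClosed (W : Set (H →L[ℂ] H)) := by
  rw [← W.centralizer_centralizer]
  exact isClosed_centralizer' _

lemma real_smul_mem (W : VonNeumannAlgebra H) {a : H →L[ℂ] H} (ha : a ∈ W) (t : ℝ) :
    t • a ∈ W := by
  rw [← Complex.coe_smul]
  exact W.toStarSubalgebra.smul_mem ha _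

lemma exp_mem' (W : VonNeumannAlgebra H) {a : H →L[ℂ] H} (ha : a ∈ W) : exp a ∈ W := by
  have hsum := (exp_series_hasSum_exp' (𝕂 := ℝ) a).tendsto_sum_nat
  have : exp a ∈ (W : Set (H →L[ℂ] H)) := by
    refine (vNa_isClosed W).mem_of_tendsto hsum (Eventually.of_forall fun n => ?_)
    exact sum_mem fun i _ => real_smul_mem W (pow_mem ha i) _
  exact this

lemma commute_all_of_commute_unitaries (Q : VonNeumannAlgebra H) (m : H →L[ℂ] H)
    (hcm : ∀ u, u ∈ Q → u ∈ unitary (H →L[ℂ] H) → u * m = m * u) :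
    ∀ q ∈ Q, q * m = m * q := by
  have sa : ∀ h, h ∈ Q → star h = h → h * m = m * h := by
    intro h hhQ hsa
    have hsmul : ∀ t : ℝ, t • (Complex.I • h) = ((t : ℂ) * Complex.I) • h := by
      intro t; rw [← Complex.coe_smul, smul_smul]
    have expQ : ∀ t : ℝ, exp (t • (Complex.I • h)) ∈ Q := fun t =>
      exp_mem' Q (real_smul_mem Q (Q.toStarSubalgebra.smul_mem hhQ _) t)
    have hstar : ∀ t : ℝ, star (t • (Complex.I • h)) = -(t • (Complex.I • h)) := by
      intro t
      rw [hsmul, star_smul, hsa, Complex.star_def, map_mul, Complex.conj_I,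
        Complex.conj_ofReal, ← neg_smul]
      ring_nf
    have expU : ∀ t : ℝ, exp (t • (Complex.I • h)) ∈ unitary (H →L[ℂ] H) := by
      intro t
      letI : NormedAlgebra ℚ (H →L[ℂ] H) := .restrictScalars ℚ ℝ (H →L[ℂ] H)
      have hs : star (exp (t • (Complex.I • h))) = exp (-(t • (Complex.I • h))) := by
        rw [star_exp, hstar]
      constructor
      · rw [hs, ← exp_add_of_commute (Commute.refl _).neg_left, neg_add_cancel, exp_zero]
      · rw [hs, ← exp_add_of_commute (Commute.refl _).neg_right, add_neg_cancel, exp_zero]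
    have hzero : (fun t : ℝ => m * exp (t • (Complex.I • h)) - exp (t • (Complex.I • h)) * m)
        = fun _ => (0 : H →L[ℂ] H) := by
      funext t
      rw [← hcm _ (expQ t) (expU t), sub_self]
    have hd := hasDerivAt_exp_smul_const (𝕂 := ℝ) (Complex.I • h) (0 : ℝ)
    have hD : HasDerivAt
        (fun t : ℝ => m * exp (t • (Complex.I • h)) - exp (t • (Complex.I • h)) * m)
        (m * (exp ((0:ℝ) • (Complex.I • h)) * (Complex.I • h)) -
          (exp ((0:ℝ) • (Complex.I • h)) * (Complex.I • h)) * m) 0 :=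
      (hd.const_mul m).sub (hd.mul_const m)
    rw [hzero] at hD
    have h0 : m * (exp ((0:ℝ) • (Complex.I • h)) * (Complex.I • h)) -
        (exp ((0:ℝ) • (Complex.I • h)) * (Complex.I • h)) * m = 0 :=
      hD.unique (hasDerivAt_const 0 0)
    rw [zero_smul, exp_zero, one_mul] at h0
    have h1 : m * (Complex.I • h) = (Complex.I • h) * m := sub_eq_zero.1 h0
    rw [mul_smul_comm, smul_mul_assoc] at h1
    exact (smul_right_injective (H →L[ℂ] H) Complex.I_ne_zero h1).symm
  intro q hq
  set a1 := q + star q with ha1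
  set a2 := Complex.I • (q - star q) with ha2
  have ha1Q : a1 ∈ Q := add_mem hq (star_mem hq)
  have ha2Q : a2 ∈ Q := Q.toStarSubalgebra.smul_mem (sub_mem hq (star_mem hq)) _
  have ha1s : star a1 = a1 := by rw [ha1, star_add, star_star, add_comm]
  have ha2s : star a2 = a2 := by
    rw [ha2, star_smul, star_sub, star_star, Complex.star_def, Complex.conj_I, neg_smul,
      ← smul_neg, neg_sub]
  have e1 := sa a1 ha1Q ha1s
  have e2 := sa a2 ha2Q ha2s
  have key : a1 - Complex.I • a2 = (2 : ℂ) • q := by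
    rw [ha2, ha1, smul_smul, Complex.I_mul_I, neg_smul, one_smul, sub_neg_eq_add, two_smul]
    abel
  have hq2 : ((2 : ℂ) • q) * m = m * ((2 : ℂ) • q) := by
    rw [← key, sub_mul, mul_sub, smul_mul_assoc, mul_smul_comm, e1, e2]
  rw [smul_mul_assoc, mul_smul_comm] at hq2
  exact smul_right_injective (H →L[ℂ] H) two_ne_zero hq2

lemma exists_wotLimit (U : Ultrafilter ℕ) (c : ℕ → H →L[ℂ] H) (hc : ∀ k, ‖c k‖ ≤ 1) :
    ∃ m : H →L[ℂ] H, ‖m‖ ≤ 1 ∧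
      ∀ ξ η : H, Tendsto (fun k => ⟪(c k) ξ, η⟫) ↑U (nhds ⟪m ξ, η⟫) := by
  have key : ∀ ξ η : H, ∃ z : ℂ, Tendsto (fun k => ⟪(c k) ξ, η⟫) ↑U (nhds z) := by
    intro ξ η
    have hb : ∀ k, (⟪(c k) ξ, η⟫) ∈ Metric.closedBall (0 : ℂ) (‖ξ‖ * ‖η‖) := by
      intro k
      rw [Metric.mem_closedBall, dist_zero_right]
      calc ‖(⟪(c k) ξ, η⟫)‖ ≤ ‖(c k) ξ‖ * ‖η‖ := norm_inner_le_norm _ _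
        _ ≤ ‖ξ‖ * ‖η‖ := mul_le_mul_of_nonneg_right (apply_norm_le' (hc k) ξ) (norm_nonneg η)
    have hle : ↑(U.map fun k => ⟪(c k) ξ, η⟫) ≤ 𝓟 (Metric.closedBall (0 : ℂ) (‖ξ‖ * ‖η‖)) := by
      rw [Ultrafilter.coe_map, le_principal_iff, mem_map]
      exact univ_mem' hb
    obtain ⟨z, _, hz⟩ := (isCompact_closedBall (0 : ℂ) (‖ξ‖ * ‖η‖)).ultrafilter_le_nhds _ hle
    exact ⟨z, by rwa [Tendsto, ← Ultrafilter.coe_map]⟩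
  choose z hz using key
  have hznorm : ∀ ξ η, ‖z ξ η‖ ≤ ‖ξ‖ * ‖η‖ := by
    intro ξ η
    refine le_of_tendsto (hz ξ η).norm (Eventually.of_forall fun k => ?_)
    calc ‖(⟪(c k) ξ, η⟫)‖ ≤ ‖(c k) ξ‖ * ‖η‖ := norm_inner_le_norm _ _
      _ ≤ ‖ξ‖ * ‖η‖ := mul_le_mul_of_nonneg_right (apply_norm_le' (hc k) ξ) (norm_nonneg η)
  have hadd_r : ∀ ξ η η', z ξ (η + η') = z ξ η + z ξ η' := by
    intro ξ η η'
    refine tendsto_nhds_unique (hz ξ (η + η')) ?_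
    have e : (fun k => ⟪(c k) ξ, η + η'⟫) = fun k => ⟪(c k) ξ, η⟫ + ⟪(c k) ξ, η'⟫ := by
      funext k; exact inner_add_right _ _ _
    rw [e]
    exact ((hz ξ η).add (hz ξ η'))
  have hsmul_r : ∀ ξ (r : ℂ) η, z ξ (r • η) = r * z ξ η := by
    intro ξ r η
    refine tendsto_nhds_unique (hz ξ (r • η)) ?_
    have e : (fun k => ⟪(c k) ξ, r • η⟫) = fun k => r * ⟪(c k) ξ, η⟫ := by
      funext k; exact inner_smul_right _ _ _
    rw [e]
    exact (hz ξ η).const_mul r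
  have hadd_l : ∀ ξ ξ' η, z (ξ + ξ') η = z ξ η + z ξ' η := by
    intro ξ ξ' η
    refine tendsto_nhds_unique (hz (ξ + ξ') η) ?_
    have e : (fun k => ⟪(c k) (ξ + ξ'), η⟫) = fun k => ⟪(c k) ξ, η⟫ + ⟪(c k) ξ', η⟫ := by
      funext k; rw [map_add, inner_add_left]
    rw [e]
    exact ((hz ξ η).add (hz ξ' η))
  have hsmul_l : ∀ (r : ℂ) ξ η, z (r • ξ) η = (starRingEnd ℂ) r * z ξ η := by
    intro r ξ η
    refine tendsto_nhds_unique (hz (r • ξ) η) ?_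
    have e : (fun k => ⟪(c k) (r • ξ), η⟫) = fun k => (starRingEnd ℂ) r * ⟪(c k) ξ, η⟫ := by
      funext k; rw [map_smul, inner_smul_left]
    rw [e]
    exact (hz ξ η).const_mul _
  have hLv : ∀ ξ : H, ∃ v : H, (∀ η, ⟪v, η⟫ = z ξ η) ∧ ‖v‖ ≤ ‖ξ‖ := by
    intro ξ
    let L : H →L[ℂ] ℂ := LinearMap.mkContinuous
      { toFun := fun η => z ξ η
        map_add' := hadd_r ξ
        map_smul' := fun r η => hsmul_r ξ r η } (‖ξ‖)
      (fun η => by simpa using hznorm ξ η)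
    refine ⟨(InnerProductSpace.toDual ℂ H).symm L, fun η => InnerProductSpace.toDual_symm_apply, ?_⟩
    rw [LinearIsometryEquiv.norm_map]
    exact LinearMap.mkContinuous_norm_le _ (norm_nonneg ξ) _
  choose v hv hvnorm using hLv
  let m : H →L[ℂ] H := LinearMap.mkContinuous
    { toFun := v
      map_add' := by
        intro ξ ξ'
        refine ext_inner_right ℂ fun η => ?_
        rw [inner_add_left, hv, hv, hv, hadd_l]
      map_smul' := by
        intro r ξ
        refine ext_inner_right ℂ fun η => ?_
        rw [RingHom.id_apply, inner_smul_left, hv, hv, hsmul_l] } 1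
    (fun ξ => by simpa using hvnorm ξ)
  refine ⟨m, LinearMap.mkContinuous_norm_le _ zero_le_one _, fun ξ η => ?_⟩
  have e : ⟪m ξ, η⟫ = z ξ η := hv ξ η
  rw [e]
  exact hz ξ η

end Aux

section TraceAux

open Filter

local notation "⟪" x ", " y "⟫" => @inner ℂ _ _ x y

variable {W : VonNeumannAlgebra H} {τ : (H →L[ℂ] H) →ₗ[ℂ] ℂ}

lemma expand_smul (z : ℂ) (a b : H →L[ℂ] H) :
    star (a + z • b) * (a + z • b) = star a * a + z • (star a * b) +
      (starRingEnd ℂ z) • (star b * a) + ((starRingEnd ℂ z) * z) • (star b * b) := by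
  rw [star_add, star_smul, add_mul, mul_add, mul_add, smul_mul_assoc, smul_mul_assoc,
    mul_smul_comm, mul_smul_comm, smul_smul]
  abel

lemma tau_expand (τ : (H →L[ℂ] H) →ₗ[ℂ] ℂ) (z : ℂ) (a b : H →L[ℂ] H) :
    τ (star (a + z • b) * (a + z • b)) =
      τ (star a * a) + z * τ (star a * b) + (starRingEnd ℂ) z * τ (star b * a) +
        ((starRingEnd ℂ) z * z) * τ (star b * b) := by
  rw [expand_smul, map_add, map_add, map_add, map_smul, map_smul, map_smul,
    smul_eq_mul, smul_eq_mul, smul_eq_mul]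

lemma trace_herm (ht : IsFNTrace W τ) {a b : H →L[ℂ] H} (ha : a ∈ W) (hb : b ∈ W) :
    τ (star b * a) = (starRingEnd ℂ) (τ (star a * b)) := by
  have mem1 : a + (1 : ℂ) • b ∈ W := add_mem ha (W.toStarSubalgebra.smul_mem hb _)
  have mem2 : a + Complex.I • b ∈ W := add_mem ha (W.toStarSubalgebra.smul_mem hb _)
  have h1 := ht.real _ mem1
  have h2 := ht.real _ mem2
  rw [tau_expand τ] at h1 h2
  have hra := ht.real a ha
  have hrb := ht.real b hb
  simp only [map_one, one_mul, mul_one, Complex.add_im, hra, hrb, Complex.conj_I,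
    Complex.mul_im, Complex.I_re, Complex.I_im, Complex.neg_re, Complex.neg_im] at h1 h2
  apply Complex.ext
  · simp only [Complex.conj_re]; linarith [h2]
  · simp only [Complex.conj_im]; linarith [h1]

lemma trace_cs (ht : IsFNTrace W τ) {a b : H →L[ℂ] H} (ha : a ∈ W) (hb : b ∈ W) :
    Complex.normSq (τ (star a * b)) ≤ (τ (star a * a)).re * (τ (star b * b)).re := by
  set s := τ (star a * b) with hs
  set Fa := (τ (star a * a)).re with hFa'
  set Fb := (τ (star b * b)).re with hFb'
  have hFa : 0 ≤ Fa := ht.nonneg a ha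
  have hFb : 0 ≤ Fb := ht.nonneg b hb
  have hreal_a : τ (star a * a) = (Fa : ℂ) := Complex.ext rfl (by simpa using ht.real a ha)
  have hreal_b : τ (star b * b) = (Fb : ℂ) := Complex.ext rfl (by simpa using ht.real b hb)
  have key : ∀ r : ℝ, 0 ≤ Fb + 2 * (r * Complex.normSq s) + r * r * Complex.normSq s * Fa := by
    intro r
    have mem : b + ((r : ℂ) * s) • a ∈ W := add_mem hb (W.toStarSubalgebra.smul_mem ha _)
    have h0 := ht.nonneg _ mem
    rw [tau_expand τ] at h0
    have hba : τ (star b * a) = (starRingEnd ℂ) s := trace_herm ht ha hb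
    rw [hba, hreal_a, hreal_b] at h0
    have e : ((Fb : ℂ) + ((r : ℂ) * s) * (starRingEnd ℂ) s + (starRingEnd ℂ) ((r : ℂ) * s) * s
        + ((starRingEnd ℂ) ((r : ℂ) * s) * ((r : ℂ) * s)) * (Fa : ℂ)).re
        = Fb + 2 * (r * Complex.normSq s) + r * r * Complex.normSq s * Fa := by
      simp only [map_mul, Complex.conj_ofReal]
      have e1 : ((r : ℂ) * s) * (starRingEnd ℂ) s = ((r * Complex.normSq s : ℝ) : ℂ) := by
        rw [mul_assoc, Complex.mul_conj]; push_cast; ring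
      have e2 : ((r : ℂ) * (starRingEnd ℂ) s) * s = ((r * Complex.normSq s : ℝ) : ℂ) := by
        rw [mul_assoc, mul_comm ((starRingEnd ℂ) s) s, Complex.mul_conj]; push_cast; ring
      have e3 : ((r : ℂ) * (starRingEnd ℂ) s) * ((r : ℂ) * s)
          = ((r * r * Complex.normSq s : ℝ) : ℂ) := by
        rw [show ((r:ℂ) * (starRingEnd ℂ) s) * ((r:ℂ) * s)
            = ((r:ℂ) * (r:ℂ)) * ((starRingEnd ℂ) s * s) by ring,
          mul_comm ((starRingEnd ℂ) s) s, Complex.mul_conj]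
        push_cast; ring
      rw [e1, e2, e3, ← Complex.ofReal_mul]
      push_cast
      simp
      ring
    rw [e] at h0
    exact h0
  rcases eq_or_lt_of_le hFa with h | h
  · by_contra hlt
    push_neg at hlt
    have hns : 0 < Complex.normSq s := by nlinarith [Complex.normSq_nonneg s]
    set r := -(Fb + 1) / (2 * Complex.normSq s) with hr'
    have hr : r * Complex.normSq s = -(Fb + 1) / 2 := by
      rw [hr']; field_simp
    have k := key r
    rw [← h] at k
    linarith [k, hr]
  · have k := key (-Fa⁻¹)
    have e : Fb + 2 * (-Fa⁻¹ * Complex.normSq s) + -Fa⁻¹ * -Fa⁻¹ * Complex.normSq s * Fa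
        = Fb - Fa⁻¹ * Complex.normSq s := by
      field_simp
      ring
    have h2 : Fa⁻¹ * Complex.normSq s ≤ Fb := by linarith [k, e]
    calc Complex.normSq s = Fa * (Fa⁻¹ * Complex.normSq s) := by field_simp
      _ ≤ Fa * Fb := mul_le_mul_of_nonneg_left h2 h.le

lemma trace_conj (ht : IsFNTrace W τ) {u c : H →L[ℂ] H} (hu : u ∈ W)
    (hu2 : u ∈ unitary (H →L[ℂ] H)) (hc : c ∈ W) :
    τ (star (u * c * star u) * (u * c * star u)) = τ (star c * c) := by
  obtain ⟨h1, _⟩ := Unitary.mem_iff.1 hu2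
  have e : star (u * c * star u) * (u * c * star u) = u * ((star c * c) * star u) := by
    calc star (u * c * star u) * (u * c * star u)
        = (u * star c) * ((star u * u) * (c * star u)) := by
          simp only [star_mul, star_star]; noncomm_ring
      _ = u * ((star c * c) * star u) := by rw [h1, one_mul]; noncomm_ring
  rw [e, ht.tracial u hu _ (mul_mem (mul_mem (star_mem hc) hc) (star_mem hu))]
  rw [mul_assoc, h1, mul_one]

lemma trace_parallelogram (τ : (H →L[ℂ] H) →ₗ[ℂ] ℂ) (A B : H →L[ℂ] H) :
    (τ (star (A - B) * (A - B))).re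
      = 2 * (τ (star A * A)).re + 2 * (τ (star B * B)).re
        - (τ (star (A + B) * (A + B))).re := by
  have e : star (A - B) * (A - B)
      = star A * A + star B * B + (star A * A + star B * B) - star (A + B) * (A + B) := by
    rw [star_sub, star_add]; noncomm_ring
  rw [e, map_sub, map_add, map_add]
  simp only [Complex.sub_re, Complex.add_re]
  ring

end TraceAux

section MainAux

open Filter

local notation "⟪" x ", " y "⟫" => @inner ℂ _ _ x y

lemma conj_norm_le {u m : H →L[ℂ] H} (hu : ‖u‖ ≤ 1) (hm : ‖m‖ ≤ 1) :
    ‖u * m * star u‖ ≤ 1 := by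
  have h1 : ‖u * m‖ ≤ 1 := by
    calc ‖u * m‖ ≤ ‖u‖ * ‖m‖ := norm_mul_le _ _
      _ ≤ 1 * 1 := mul_le_mul hu hm (norm_nonneg m) zero_le_one
      _ = 1 := one_mul 1
  calc ‖u * m * star u‖ ≤ ‖u * m‖ * ‖star u‖ := norm_mul_le _ _
    _ ≤ 1 * 1 := mul_le_mul h1 (by rwa [norm_star]) (norm_nonneg _) zero_le_one
    _ = 1 := one_mul 1

lemma approx (Nv Qv : VonNeumannAlgebra H) (τ : (H →L[ℂ] H) →ₗ[ℂ] ℂ) (ht : IsFNTrace Nv τ)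
    (hQN : (Qv : Set (H →L[ℂ] H)) ⊆ (Nv : Set (H →L[ℂ] H)))
    (P M : Set (H →L[ℂ] H)) (γ1 γ2 : ℝ) (hγ1 : 0 < γ1) (hγ2 : 0 < γ2)
    (h1 : ∀ x ∈ M, ‖x‖ ≤ 1 → ∃ y ∈ (Nv : Set (H →L[ℂ] H)), ‖y‖ ≤ 1 ∧ ‖x - y‖ < γ1)
    (h2 : ∀ u ∈ (Qv : Set (H →L[ℂ] H)), ‖u‖ ≤ 1 → ∃ w ∈ P, ‖w‖ ≤ 1 ∧ ‖u - w‖ < γ2)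
    (x : H →L[ℂ] H) (hxP : x ∈ Set.centralizer P) (hxM : x ∈ M) (hx1 : ‖x‖ ≤ 1) :
    ∃ m, m ∈ Set.centralizer (Qv : Set (H →L[ℂ] H)) ∧ m ∈ (Nv : Set (H →L[ℂ] H)) ∧
      ‖m‖ ≤ 1 ∧ ‖x - m‖ ≤ γ1 + 2 * γ2 := by
  obtain ⟨y, hyN, hy1, hxy⟩ := h1 x hxM hx1
  set B := γ1 + 2 * γ2 with hB
  have hB0 : 0 ≤ B := by positivity
  set S : Set (H →L[ℂ] H) :=
    {s | ∃ u, u ∈ Qv ∧ u ∈ unitary (H →L[ℂ] H) ∧ s = u * y * star u} with hSdef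
  set C := convexHull ℝ S with hCdef
  set T : Set (H →L[ℂ] H) := {z | z ∈ (Nv : Set (H →L[ℂ] H)) ∧ ‖z‖ ≤ 1 ∧ ‖x - z‖ ≤ B}
    with hTdef
  have hTconv : Convex ℝ T := by
    intro z1 hz1 z2 hz2 a b ha hb hab
    refine ⟨add_mem (real_smul_mem Nv hz1.1 a) (real_smul_mem Nv hz2.1 b), ?_, ?_⟩
    · calc ‖a • z1 + b • z2‖ ≤ ‖a • z1‖ + ‖b • z2‖ := norm_add_le _ _
        _ = a * ‖z1‖ + b * ‖z2‖ := by
            rw [norm_smul, norm_smul, Real.norm_of_nonneg ha, Real.norm_of_nonneg hb]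
        _ ≤ a * 1 + b * 1 :=
            add_le_add (mul_le_mul_of_nonneg_left hz1.2.1 ha)
              (mul_le_mul_of_nonneg_left hz2.2.1 hb)
        _ = 1 := by rw [mul_one, mul_one, hab]
    · have e : a • (x - z1) + b • (x - z2) = x - (a • z1 + b • z2) := by
        calc a • (x - z1) + b • (x - z2) = (a + b) • x - (a • z1 + b • z2) := by
              rw [smul_sub, smul_sub, add_smul]; abel
          _ = x - (a • z1 + b • z2) := by rw [hab, one_smul]
      calc ‖x - (a • z1 + b • z2)‖ = ‖a • (x - z1) + b • (x - z2)‖ := by rw [e]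
        _ ≤ ‖a • (x - z1)‖ + ‖b • (x - z2)‖ := norm_add_le _ _
        _ = a * ‖x - z1‖ + b * ‖x - z2‖ := by
            rw [norm_smul, norm_smul, Real.norm_of_nonneg ha, Real.norm_of_nonneg hb]
        _ ≤ a * B + b * B :=
            add_le_add (mul_le_mul_of_nonneg_left hz1.2.2 ha)
              (mul_le_mul_of_nonneg_left hz2.2.2 hb)
        _ = B := by rw [← add_mul, hab, one_mul]
  have hST : S ⊆ T := by
    rintro s ⟨u, huQ, huU, rfl⟩
    obtain ⟨hu1, hu2⟩ := Unitary.mem_iff.1 huU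
    have hun : ‖u‖ ≤ 1 := unitary_norm_le huU
    obtain ⟨w, hwP, hw1, huw⟩ := h2 u huQ hun
    have hxw : w * x = x * w := hxP w hwP
    refine ⟨mul_mem (mul_mem (hQN huQ) hyN) (star_mem (hQN huQ)), conj_norm_le hun hy1, ?_⟩
    have decomp : x - u * y * star u = (x * u - u * x) * star u + u * (x - y) * star u := by
      have hx' : x = x * (u * star u) := by rw [hu2, mul_one]
      calc x - u * y * star u = x * (u * star u) - u * y * star u := by rw [← hx']
        _ = (x * u - u * x) * star u + u * (x - y) * star u := by noncomm_ring
    have comm : x * (u - w) - (u - w) * x = x * u - u * x := by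
      rw [mul_sub, sub_mul, hxw]; abel
    have est1 : ‖x * u - u * x‖ ≤ 2 * γ2 := by
      rw [← comm]
      calc ‖x * (u - w) - (u - w) * x‖ ≤ ‖x * (u - w)‖ + ‖(u - w) * x‖ := norm_sub_le _ _
        _ ≤ ‖x‖ * ‖u - w‖ + ‖u - w‖ * ‖x‖ := add_le_add (norm_mul_le _ _) (norm_mul_le _ _)
        _ ≤ 1 * γ2 + γ2 * 1 :=
            add_le_add (mul_le_mul hx1 huw.le (norm_nonneg _) zero_le_one)
              (mul_le_mul huw.le hx1 (norm_nonneg _) hγ2.le)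
        _ = 2 * γ2 := by ring
    have husn : ‖star u‖ ≤ 1 := by rwa [norm_star]
    calc ‖x - u * y * star u‖
        = ‖(x * u - u * x) * star u + u * (x - y) * star u‖ := by rw [decomp]
      _ ≤ ‖(x * u - u * x) * star u‖ + ‖u * (x - y) * star u‖ := norm_add_le _ _
      _ ≤ ‖x * u - u * x‖ * ‖star u‖ + ‖u * (x - y)‖ * ‖star u‖ :=
          add_le_add (norm_mul_le _ _) (norm_mul_le _ _)
      _ ≤ (2 * γ2) * 1 + (‖u‖ * ‖x - y‖) * 1 := by
          refine add_le_add (mul_le_mul est1 husn (norm_nonneg _) (by positivity)) ?_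
          exact mul_le_mul (norm_mul_le _ _) husn (norm_nonneg _)
            (by positivity)
      _ ≤ (2 * γ2) * 1 + (1 * γ1) * 1 := by
          refine add_le_add le_rfl ?_
          have : ‖u‖ * ‖x - y‖ ≤ 1 * γ1 :=
            mul_le_mul hun hxy.le (norm_nonneg _) zero_le_one
          nlinarith
      _ = B := by rw [hB]; ring
  have hCT : C ⊆ T := convexHull_min hST hTconv
  have hCconv : Convex ℝ C := convex_convexHull ℝ S
  have hyC : y ∈ C := by
    refine subset_convexHull ℝ S ⟨1, one_mem Qv, one_mem (unitary (H →L[ℂ] H)), ?_⟩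
    rw [star_one, one_mul, mul_one]
  have hCu : ∀ u, u ∈ Qv → u ∈ unitary (H →L[ℂ] H) → ∀ c ∈ C, u * c * star u ∈ C := by
    intro u huQ huU
    set φ : (H →L[ℂ] H) →ₗ[ℝ] (H →L[ℂ] H) :=
      { toFun := fun z => u * z * star u
        map_add' := fun z1 z2 => by
          show u * (z1 + z2) * star u = u * z1 * star u + u * z2 * star u
          rw [mul_add, add_mul]
        map_smul' := fun r z => by
          show u * (r • z) * star u = r • (u * z * star u)
          rw [mul_smul_comm, smul_mul_assoc] } with hφ
    have hφS : ∀ s ∈ S, φ s ∈ C := by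
      rintro s ⟨v, hvQ, hvU, rfl⟩
      refine subset_convexHull ℝ S ⟨u * v, mul_mem huQ hvQ, mul_mem huU hvU, ?_⟩
      show u * (v * y * star v) * star u = (u * v) * y * star (u * v)
      rw [star_mul]
      noncomm_ring
    have hsub : C ⊆ φ ⁻¹' C := convexHull_min (fun s hs => hφS s hs) (hCconv.linear_preimage φ)
    intro c hc
    exact hsub hc
  set F : (H →L[ℂ] H) → ℝ := fun c => (τ (star c * c)).re with hF
  have hFC0 : ∀ c ∈ C, 0 ≤ F c := fun c hc => ht.nonneg c (hCT hc).1
  have hEne : (F '' C).Nonempty := ⟨F y, y, hyC, rfl⟩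
  have hEbdd : BddBelow (F '' C) := ⟨0, by rintro e ⟨c, hc, rfl⟩; exact hFC0 c hc⟩
  set δ := sInf (F '' C) with hδ
  have hδle : ∀ c ∈ C, δ ≤ F c := fun c hc => csInf_le hEbdd ⟨c, hc, rfl⟩
  have hseq : ∀ k : ℕ, ∃ c ∈ C, F c < δ + 1 / (k + 1) := by
    intro k
    have hlt : δ < δ + 1 / (k + 1) := by
      have : (0:ℝ) < 1 / (k + 1) := by positivity
      linarith
    obtain ⟨e, ⟨c, hc, rfl⟩, hlt'⟩ := exists_lt_of_csInf_lt hEne hlt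
    exact ⟨c, hc, hlt'⟩
  choose c hcC hck using hseq
  have hcN : ∀ k, c k ∈ (Nv : Set (H →L[ℂ] H)) := fun k => (hCT (hcC k)).1
  have hc1 : ∀ k, ‖c k‖ ≤ 1 := fun k => (hCT (hcC k)).2.1
  set U := Ultrafilter.of (atTop : Filter ℕ) with hU
  have hUle : (U : Filter ℕ) ≤ atTop := Ultrafilter.of_le _
  obtain ⟨m, hm1, hm⟩ := exists_wotLimit U c hc1
  have hmN : m ∈ (Nv : Set (H →L[ℂ] H)) := by
    rw [← Nv.centralizer_centralizer, Set.mem_centralizer_iff]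
    intro s hs
    refine ContinuousLinearMap.ext fun ξ => ext_inner_right ℂ fun η => ?_
    have e : ∀ k, ⟪(c k) (s ξ), η⟫ = ⟪(c k) ξ, (star s) η⟫ := by
      intro k
      have hcs : s * c k = c k * s := (hs (c k) (hcN k)).symm
      calc ⟪(c k) (s ξ), η⟫ = ⟪(c k * s) ξ, η⟫ := rfl
        _ = ⟪(s * c k) ξ, η⟫ := by rw [hcs]
        _ = ⟪(c k) ξ, (star s) η⟫ := apply_inner s ((c k) ξ) η
    have t1 : Tendsto (fun k => ⟪(c k) (s ξ), η⟫) ↑U (nhds ⟪m (s ξ), η⟫) := hm (s ξ) η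
    have t2 : Tendsto (fun k => ⟪(c k) (s ξ), η⟫) ↑U (nhds ⟪m ξ, (star s) η⟫) := by
      rw [show (fun k => ⟪(c k) (s ξ), η⟫) = fun k => ⟪(c k) ξ, (star s) η⟫ from funext e]
      exact hm ξ _
    calc ⟪(s * m) ξ, η⟫ = ⟪m ξ, (star s) η⟫ := apply_inner s (m ξ) η
      _ = ⟪m (s ξ), η⟫ := (tendsto_nhds_unique t1 t2).symm
      _ = ⟪(m * s) ξ, η⟫ := rfl
  have hxm : ‖x - m‖ ≤ B := by
    have hb : ∀ ξ η : H, ‖⟪(x - m) ξ, η⟫‖ ≤ B * ‖ξ‖ * ‖η‖ := by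
      intro ξ η
      have t : Tendsto (fun k => ⟪(x - c k) ξ, η⟫) ↑U (nhds ⟪(x - m) ξ, η⟫) := by
        simp only [ContinuousLinearMap.sub_apply, inner_sub_left]
        exact tendsto_const_nhds.sub (hm ξ η)
      refine le_of_tendsto t.norm (Eventually.of_forall fun k => ?_)
      calc ‖⟪(x - c k) ξ, η⟫‖ ≤ ‖(x - c k) ξ‖ * ‖η‖ := norm_inner_le_norm _ _
        _ ≤ (‖x - c k‖ * ‖ξ‖) * ‖η‖ :=
            mul_le_mul_of_nonneg_right ((x - c k).le_opNorm ξ) (norm_nonneg η)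
        _ ≤ B * ‖ξ‖ * ‖η‖ :=
            mul_le_mul_of_nonneg_right
              (mul_le_mul_of_nonneg_right (hCT (hcC k)).2.2 (norm_nonneg ξ)) (norm_nonneg η)
    refine ContinuousLinearMap.opNorm_le_bound _ hB0 fun ξ => ?_
    rcases eq_or_ne ((x - m) ξ) 0 with hz | hz
    · rw [hz, norm_zero]; positivity
    · have hb2 := hb ξ ((x - m) ξ)
      rw [@inner_self_eq_norm_sq_to_K ℂ] at hb2
      simp only [norm_pow, RCLike.norm_ofReal, abs_norm] at hb2
      have hpos : 0 < ‖(x - m) ξ‖ := norm_pos_iff.2 hz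
      nlinarith
  have hfix : ∀ u, u ∈ Qv → u ∈ unitary (H →L[ℂ] H) → u * m * star u = m := by
    intro u huQ huU
    have huN : u ∈ Nv := hQN huQ
    set d := u * m * star u - m with hd
    have hdN : d ∈ Nv := sub_mem (mul_mem (mul_mem huN hmN) (star_mem huN)) hmN
    set dk : ℕ → (H →L[ℂ] H) := fun k => u * c k * star u - c k with hdk
    have hdkN : ∀ k, dk k ∈ Nv := fun k =>
      sub_mem (mul_mem (mul_mem huN (hcN k)) (star_mem huN)) (hcN k)
    have hdn : ‖d‖ ≤ 2 := by
      calc ‖d‖ ≤ ‖u * m * star u‖ + ‖m‖ := norm_sub_le _ _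
        _ ≤ 1 + 1 := add_le_add (conj_norm_le (unitary_norm_le huU) hm1) hm1
        _ = 2 := by norm_num
    have hdkn : ∀ k, ‖dk k‖ ≤ 2 := by
      intro k
      calc ‖dk k‖ ≤ ‖u * c k * star u‖ + ‖c k‖ := norm_sub_le _ _
        _ ≤ 1 + 1 := add_le_add (conj_norm_le (unitary_norm_le huU) (hc1 k)) (hc1 k)
        _ = 2 := by norm_num
    have hFhalf : ∀ z : H →L[ℂ] H,
        (τ (star ((2⁻¹:ℂ) • z) * ((2⁻¹:ℂ) • z))).re = 4⁻¹ * (τ (star z * z)).re := by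
      intro z
      rw [star_smul, smul_mul_assoc, mul_smul_comm, smul_smul, map_smul]
      have e : star (2⁻¹:ℂ) * (2⁻¹:ℂ) = ((4⁻¹ : ℝ) : ℂ) := by
        have h1 : star (2⁻¹:ℂ) = (2⁻¹:ℂ) := by
          rw [Complex.star_def, show (2⁻¹:ℂ) = ((2⁻¹:ℝ):ℂ) by push_cast; ring,
            Complex.conj_ofReal]
        rw [h1]; push_cast; norm_num
      rw [e, smul_eq_mul, Complex.re_ofReal_mul]
    have hFdk : ∀ k, F (dk k) ≤ 4 * (1 / (k + 1)) := by
      intro k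
      have hconj : F (u * c k * star u) = F (c k) :=
        congrArg Complex.re (trace_conj ht huN huU (hcN k))
      have hmidC : (1/2 : ℝ) • (u * c k * star u) + (1/2 : ℝ) • (c k) ∈ C :=
        hCconv (hCu u huQ huU _ (hcC k)) (hcC k) (by norm_num) (by norm_num) (by norm_num)
      have hmide : (1/2 : ℝ) • (u * c k * star u) + (1/2 : ℝ) • (c k)
          = (2⁻¹ : ℂ) • (u * c k * star u + c k) := by
        rw [← smul_add, ← Complex.coe_smul]
        norm_num
      have hδmid : δ ≤ F ((2⁻¹ : ℂ) • (u * c k * star u + c k)) := by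
        rw [← hmide]; exact hδle _ hmidC
      have hpar := trace_parallelogram τ (u * c k * star u) (c k)
      have hhalf := hFhalf (u * c k * star u + c k)
      have hck' := hck k
      simp only [hF] at hconj hδmid hpar hhalf hck' ⊢
      rw [hhalf] at hδmid
      rw [hpar, hconj]
      linarith
    have hτ0 : τ (star d * d) = 0 := by
      have hwot : ∀ ξ η : H,
          Tendsto (fun k => ⟪((4⁻¹:ℂ) • (star d * dk k)) ξ, η⟫) ↑U
            (nhds ⟪((4⁻¹:ℂ) • (star d * d)) ξ, η⟫) := by
        intro ξ η
        have base : Tendsto (fun k => ⟪(dk k) ξ, d η⟫) ↑U (nhds ⟪d ξ, d η⟫) := by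
          have e1 : ∀ (z : H →L[ℂ] H) (ρ σ2 : H),
              ⟪(u * z * star u) ρ, σ2⟫ = ⟪z ((star u) ρ), (star u) σ2⟫ := by
            intro z ρ σ2
            calc ⟪(u * z * star u) ρ, σ2⟫ = ⟪u (z ((star u) ρ)), σ2⟫ := rfl
              _ = ⟪z ((star u) ρ), (star u) σ2⟫ := apply_inner u _ σ2
          have l1 : Tendsto (fun k => ⟪(u * c k * star u) ξ, d η⟫) ↑U
              (nhds ⟪(u * m * star u) ξ, d η⟫) := by
            rw [show (fun k => ⟪(u * c k * star u) ξ, d η⟫)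
                = fun k => ⟪(c k) ((star u) ξ), (star u) (d η)⟫ from
                funext fun k => e1 (c k) ξ (d η), e1 m ξ (d η)]
            exact hm ((star u) ξ) ((star u) (d η))
          simp only [hdk, hd, ContinuousLinearMap.sub_apply, inner_sub_left]
          exact l1.sub (hm ξ (d η))
        have e2 : ∀ z : H →L[ℂ] H,
            ⟪((4⁻¹:ℂ) • (star d * z)) ξ, η⟫ = (4⁻¹:ℂ) * ⟪z ξ, d η⟫ := by
          intro z
          rw [ContinuousLinearMap.smul_apply, inner_smul_left]
          congr 1
          · rw [show (4⁻¹:ℂ) = ((4⁻¹:ℝ):ℂ) by push_cast; ring, Complex.conj_ofReal]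
          · exact star_apply_inner d (z ξ) η
        rw [show (fun k => ⟪((4⁻¹:ℂ) • (star d * dk k)) ξ, η⟫)
            = fun k => (4⁻¹:ℂ) * ⟪(dk k) ξ, d η⟫ from funext fun k => e2 (dk k), e2 d]
        exact base.const_mul _
      have t1 : Tendsto (fun k => τ ((4⁻¹:ℂ) • (star d * dk k))) ↑U
          (nhds (τ ((4⁻¹:ℂ) • (star d * d)))) := by
        refine ht.normal ℕ ↑U _ _
          (fun k => Nv.toStarSubalgebra.smul_mem (mul_mem (star_mem hdN) (hdkN k)) _)
          (fun k => ?_)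
          (Nv.toStarSubalgebra.smul_mem (mul_mem (star_mem hdN) hdN) _) hwot
        rw [norm_smul]
        have : ‖star d * dk k‖ ≤ 4 := by
          calc ‖star d * dk k‖ ≤ ‖star d‖ * ‖dk k‖ := norm_mul_le _ _
            _ ≤ 2 * 2 := by
                rw [norm_star]
                exact mul_le_mul hdn (hdkn k) (norm_nonneg _) (by norm_num)
            _ = 4 := by norm_num
        have h4 : ‖(4⁻¹:ℂ)‖ = 4⁻¹ := by norm_num
        rw [h4]
        linarith
      have t2 : Tendsto (fun k => τ ((4⁻¹:ℂ) • (star d * dk k))) ↑U (nhds 0) := by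
        refine Tendsto.mono_left ?_ hUle
        have hFd0 : 0 ≤ F d := ht.nonneg d hdN
        have hglim : Tendsto (fun k : ℕ => 4⁻¹ * Real.sqrt (F d * (4 * (1 / (k + 1)))))
            atTop (nhds 0) := by
          have h0 := tendsto_one_div_add_atTop_nhds_zero_nat (𝕜 := ℝ)
          have h1 := (h0.const_mul (4:ℝ)).const_mul (F d)
          have h2 : Tendsto (fun k : ℕ => F d * (4 * (1 / (k + 1)))) atTop (nhds 0) := by
            simpa using h1
          have h3 := h2.sqrt
          rw [Real.sqrt_zero] at h3
          simpa using h3.const_mul (4⁻¹:ℝ)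
        refine squeeze_zero_norm (fun k => ?_) hglim
        · rw [map_smul, smul_eq_mul, norm_mul]
          have h4 : ‖(4⁻¹:ℂ)‖ = 4⁻¹ := by norm_num
          rw [h4]
          refine mul_le_mul_of_nonneg_left ?_ (by norm_num)
          have hcs := trace_cs ht hdN (hdkN k)
          have hbound : Complex.normSq (τ (star d * dk k)) ≤ F d * (4 * (1 / (k + 1))) := by
            refine hcs.trans ?_
            exact mul_le_mul_of_nonneg_left (hFdk k) hFd0
          calc ‖τ (star d * dk k)‖ = Real.sqrt (Complex.normSq (τ (star d * dk k))) := by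
                rw [Complex.norm_def]
            _ ≤ Real.sqrt (F d * (4 * (1 / (k + 1)))) := Real.sqrt_le_sqrt hbound
      have h0 := tendsto_nhds_unique t1 t2
      rw [map_smul, smul_eq_mul] at h0
      have h4 : (4⁻¹:ℂ) ≠ 0 := by norm_num
      exact (mul_eq_zero.1 h0).resolve_left h4
    have hd0 : d = 0 := ht.faithful d hdN hτ0
    rw [hd] at hd0
    exact sub_eq_zero.1 hd0
  have hcomm : ∀ u, u ∈ Qv → u ∈ unitary (H →L[ℂ] H) → u * m = m * u := by
    intro u huQ huU
    have hf := hfix u huQ huU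
    have hu1 : star u * u = 1 := (Unitary.mem_iff.1 huU).1
    have := congrArg (fun z => z * u) hf
    simpa [mul_assoc, hu1] using this
  have hcent : m ∈ Set.centralizer (Qv : Set (H →L[ℂ] H)) := by
    rw [Set.mem_centralizer_iff]
    intro q hq
    exact commute_all_of_commute_unitaries Qv m hcomm q hq
  exact ⟨m, hcent, hmN, hm1, hxm⟩

/-- The membership predicate in the defining set of `kkDist`. -/
def good (A B : Set (H →L[ℂ] H)) (γ : ℝ) : Prop :=
  0 < γ ∧
    (∀ x ∈ A, ‖x‖ ≤ 1 → ∃ y ∈ B, ‖y‖ ≤ 1 ∧ ‖x - y‖ < γ) ∧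
    (∀ y ∈ B, ‖y‖ ≤ 1 → ∃ x ∈ A, ‖x‖ ≤ 1 ∧ ‖y - x‖ < γ)

lemma kkDist_eq (A B : Set (H →L[ℂ] H)) : kkDist A B = sInf {γ : ℝ | good A B γ} := rfl

lemma kkDist_le_of_good {A B : Set (H →L[ℂ] H)} {γ : ℝ} (h : good A B γ) :
    kkDist A B ≤ γ := by
  rw [kkDist_eq]
  exact csInf_le ⟨0, fun γ' hγ' => hγ'.1.le⟩ h

lemma good_two {A B : Set (H →L[ℂ] H)} (h0A : (0 : H →L[ℂ] H) ∈ A)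
    (h0B : (0 : H →L[ℂ] H) ∈ B) : good A B 2 := by
  refine ⟨two_pos, fun x _ hx1 => ⟨0, h0B, by simp, ?_⟩, fun y _ hy1 => ⟨0, h0A, by simp, ?_⟩⟩
  · rw [sub_zero]; exact lt_of_le_of_lt hx1 one_lt_two
  · rw [sub_zero]; exact lt_of_le_of_lt hy1 one_lt_two

end MainAux


theorem statement10 (M N P Q : VonNeumannAlgebra H)
    (hM : IsIIOneFactor M) (hN : IsIIOneFactor N)
    (hPM : (P : Set (H →L[ℂ] H)) ⊆ (M : Set (H →L[ℂ] H))) (hQN : (Q : Set (H →L[ℂ] H)) ⊆ (N : Set (H →L[ℂ] H))) :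
    kkDist (Set.centralizer (P : Set (H →L[ℂ] H)) ∩ (M : Set (H →L[ℂ] H))) (Set.centralizer (Q : Set (H →L[ℂ] H)) ∩ (N : Set (H →L[ℂ] H))) ≤
      kkDist (M : Set (H →L[ℂ] H)) (N : Set (H →L[ℂ] H)) + 2 * Real.sqrt 2 * kkDist (P : Set (H →L[ℂ] H)) (Q : Set (H →L[ℂ] H)) := by
  obtain ⟨-, -, τM, htM⟩ := hM
  obtain ⟨-, -, τN, htN⟩ := hN
  have hsqrt : (1:ℝ) < Real.sqrt 2 := by
    rw [show (1:ℝ) = Real.sqrt 1 from Real.sqrt_one.symm]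
    exact Real.sqrt_lt_sqrt (by norm_num) (by norm_num)
  have hc : (0:ℝ) < 2 * Real.sqrt 2 := by nlinarith
  have key : ∀ γ1, good (M : Set (H →L[ℂ] H)) (N : Set (H →L[ℂ] H)) γ1 →
      ∀ γ2, good (P : Set (H →L[ℂ] H)) (Q : Set (H →L[ℂ] H)) γ2 →
      kkDist (Set.centralizer (P : Set (H →L[ℂ] H)) ∩ (M : Set (H →L[ℂ] H)))
        (Set.centralizer (Q : Set (H →L[ℂ] H)) ∩ (N : Set (H →L[ℂ] H)))
        ≤ γ1 + 2 * Real.sqrt 2 * γ2 := by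
    intro γ1 hγ1 γ2 hγ2
    refine kkDist_le_of_good ⟨?_, ?_, ?_⟩
    · nlinarith [hγ1.1, hγ2.1]
    · intro x hx hx1
      obtain ⟨m, hmc, hmN, hm1, hxm⟩ := approx N Q τN htN hQN
        (P : Set (H →L[ℂ] H)) (M : Set (H →L[ℂ] H)) γ1 γ2 hγ1.1 hγ2.1
        hγ1.2.1 hγ2.2.2 x hx.1 hx.2 hx1
      refine ⟨m, ⟨hmc, hmN⟩, hm1, lt_of_le_of_lt hxm ?_⟩
      nlinarith [hγ2.1]
    · intro y hy hy1
      obtain ⟨m, hmc, hmM, hm1, hym⟩ := approx M P τM htM hPM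
        (Q : Set (H →L[ℂ] H)) (N : Set (H →L[ℂ] H)) γ1 γ2 hγ1.1 hγ2.1
        hγ1.2.2 hγ2.2.1 y hy.1 hy.2 hy1
      refine ⟨m, ⟨hmc, hmM⟩, hm1, lt_of_le_of_lt hym ?_⟩
      nlinarith [hγ2.1]
  have hne1 : {γ : ℝ | good (M : Set (H →L[ℂ] H)) (N : Set (H →L[ℂ] H)) γ}.Nonempty :=
    ⟨2, good_two (zero_mem M) (zero_mem N)⟩
  have hne2 : {γ : ℝ | good (P : Set (H →L[ℂ] H)) (Q : Set (H →L[ℂ] H)) γ}.Nonempty :=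
    ⟨2, good_two (zero_mem P) (zero_mem Q)⟩
  have step1 : ∀ γ1, good (M : Set (H →L[ℂ] H)) (N : Set (H →L[ℂ] H)) γ1 →
      kkDist (Set.centralizer (P : Set (H →L[ℂ] H)) ∩ (M : Set (H →L[ℂ] H)))
        (Set.centralizer (Q : Set (H →L[ℂ] H)) ∩ (N : Set (H →L[ℂ] H)))
        ≤ γ1 + 2 * Real.sqrt 2 * kkDist (P : Set (H →L[ℂ] H)) (Q : Set (H →L[ℂ] H)) := by
    intro γ1 hγ1
    have hle : (kkDist (Set.centralizer (P : Set (H →L[ℂ] H)) ∩ (M : Set (H →L[ℂ] H)))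
        (Set.centralizer (Q : Set (H →L[ℂ] H)) ∩ (N : Set (H →L[ℂ] H))) - γ1)
          / (2 * Real.sqrt 2) ≤ kkDist (P : Set (H →L[ℂ] H)) (Q : Set (H →L[ℂ] H)) := by
      rw [kkDist_eq (P : Set (H →L[ℂ] H)) (Q : Set (H →L[ℂ] H))]
      refine le_csInf hne2 fun γ2 hγ2 => ?_
      rw [div_le_iff₀ hc]
      have hk := key γ1 hγ1 γ2 hγ2
      nlinarith [hk]
    rw [div_le_iff₀ hc] at hle
    nlinarith [hle]
  have step2 : kkDist (Set.centralizer (P : Set (H →L[ℂ] H)) ∩ (M : Set (H →L[ℂ] H)))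
      (Set.centralizer (Q : Set (H →L[ℂ] H)) ∩ (N : Set (H →L[ℂ] H)))
      - 2 * Real.sqrt 2 * kkDist (P : Set (H →L[ℂ] H)) (Q : Set (H →L[ℂ] H))
      ≤ kkDist (M : Set (H →L[ℂ] H)) (N : Set (H →L[ℂ] H)) := by
    rw [kkDist_eq (M : Set (H →L[ℂ] H)) (N : Set (H →L[ℂ] H))]
    refine le_csInf hne1 fun γ1 hγ1 => ?_
    linarith [step1 γ1 hγ1]
  linarith [step2]

end KK
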